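/- The function g(θ) = θ(e^θ−1)(e^θ(θ−1)+1) / (2(p−1)(e^{2θ} − e^θ(θ²+2) + 1)) − θ/2 satisfies lim_{θ→0} g(θ) = 3/(p−1). -/

import Mathlib

open Real Filter

private lemma hexp2 (θ : ℝ) : HasDerivAt (fun x : ℝ => Real.exp (2 * x)) (2 * Real.exp (2 * θ)) θ := by
  have h := (Real.hasDerivAt_exp (2 * θ)).comp θ ((hasDerivAt_id θ).const_mul 2)
  exact h.congr_deriv (by ring)

private lemma ne_ev : ∀ᶠ θ : ℝ in nhdsWithin 0 {(0:ℝ)}ᶜ, θ ≠ 0 := by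
  filter_upwards [self_mem_nhdsWithin] with θ hθ using hθ

private lemma cont_tendsto {f : ℝ → ℝ} (hf : Continuous f) {L : ℝ} (h : f 0 = L) :
    Tendsto f (nhdsWithin 0 {(0:ℝ)}ᶜ) (nhds L) :=
  tendsto_nhdsWithin_of_tendsto_nhds (h ▸ hf.tendsto 0)

/-- step: D1/(24θ) → 1/12 where D1 = 8e^{2θ} - e^θ(θ²+6θ+8) -/
private lemma step1 : Tendsto (fun θ : ℝ =>
    (8 * Real.exp (2*θ) - Real.exp θ * (θ^2 + 6*θ + 8)) / (24 * θ))
    (nhdsWithin 0 {(0:ℝ)}ᶜ) (nhds (1/12)) := by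
  apply HasDerivAt.lhopital_zero_nhdsNE
    (f' := fun θ => 16 * Real.exp (2*θ) - Real.exp θ * (θ^2 + 8*θ + 14))
    (g' := fun _ : ℝ => (24:ℝ))
  · filter_upwards with θ
    have h := ((hexp2 θ).const_mul 8).sub ((Real.hasDerivAt_exp θ).mul
      (((((hasDerivAt_pow 2 θ).add ((hasDerivAt_id θ).const_mul 6))).add_const 8)))
    refine h.congr_deriv ?_ <;> (try simp only [id_eq, Pi.add_apply]) <;> (try push_cast) <;> (try ring)
  · filter_upwards with θ
    simpa using (hasDerivAt_id θ).const_mul (24:ℝ)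
  · filter_upwards with θ; norm_num
  · exact cont_tendsto (by continuity) (by norm_num [Real.exp_zero])
  · exact cont_tendsto (by continuity) (by norm_num)
  · exact cont_tendsto (f := fun θ : ℝ =>
      (16 * Real.exp (2*θ) - Real.exp θ * (θ^2 + 8*θ + 14)) / 24)
      (by continuity) (by norm_num [Real.exp_zero])

/-- step: D2/(12θ²) → 1/12 where D2 = 4e^{2θ} - e^θ(θ²+4θ+4) -/
private lemma step2 : Tendsto (fun θ : ℝ =>
    (4 * Real.exp (2*θ) - Real.exp θ * (θ^2 + 4*θ + 4)) / (12 * θ^2))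
    (nhdsWithin 0 {(0:ℝ)}ᶜ) (nhds (1/12)) := by
  apply HasDerivAt.lhopital_zero_nhdsNE
    (f' := fun θ => 8 * Real.exp (2*θ) - Real.exp θ * (θ^2 + 6*θ + 8))
    (g' := fun θ : ℝ => (24:ℝ) * θ)
  · filter_upwards with θ
    have h := ((hexp2 θ).const_mul 4).sub ((Real.hasDerivAt_exp θ).mul
      (((((hasDerivAt_pow 2 θ).add ((hasDerivAt_id θ).const_mul 4))).add_const 4)))
    refine h.congr_deriv ?_ <;> (try simp only [id_eq, Pi.add_apply]) <;> (try push_cast) <;> (try ring)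
  · filter_upwards with θ
    have h := (hasDerivAt_pow 2 θ).const_mul (12:ℝ)
    refine h.congr_deriv ?_ <;> (try simp only [id_eq]) <;> (try push_cast) <;> (try ring)
  · filter_upwards [ne_ev] with θ hθ
    simpa using hθ
  · exact cont_tendsto (by continuity) (by norm_num [Real.exp_zero])
  · exact cont_tendsto (by continuity) (by norm_num)
  · exact step1

/-- step: D3/(4θ³) → 1/12 where D3 = 2e^{2θ} - e^θ(θ²+2θ+2) -/
private lemma step3 : Tendsto (fun θ : ℝ =>
    (2 * Real.exp (2*θ) - Real.exp θ * (θ^2 + 2*θ + 2)) / (4 * θ^3))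
    (nhdsWithin 0 {(0:ℝ)}ᶜ) (nhds (1/12)) := by
  apply HasDerivAt.lhopital_zero_nhdsNE
    (f' := fun θ => 4 * Real.exp (2*θ) - Real.exp θ * (θ^2 + 4*θ + 4))
    (g' := fun θ : ℝ => (12:ℝ) * θ^2)
  · filter_upwards with θ
    have h := ((hexp2 θ).const_mul 2).sub ((Real.hasDerivAt_exp θ).mul
      (((((hasDerivAt_pow 2 θ).add ((hasDerivAt_id θ).const_mul 2))).add_const 2)))
    refine h.congr_deriv ?_ <;> (try simp only [id_eq, Pi.add_apply]) <;> (try push_cast) <;> (try ring)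
  · filter_upwards with θ
    have h := (hasDerivAt_pow 3 θ).const_mul (4:ℝ)
    refine h.congr_deriv ?_ <;> (try simp only [id_eq]) <;> (try push_cast) <;> (try ring)
  · filter_upwards [ne_ev] with θ hθ
    simpa using hθ
  · exact cont_tendsto (by continuity) (by norm_num [Real.exp_zero])
  · exact cont_tendsto (by continuity) (by norm_num)
  · exact step2

/-- D/θ⁴ → 1/12 where D = e^{2θ} - e^θ(θ²+2) + 1 -/
private lemma step4 : Tendsto (fun θ : ℝ =>
    (Real.exp (2*θ) - Real.exp θ * (θ^2 + 2) + 1) / θ^4)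
    (nhdsWithin 0 {(0:ℝ)}ᶜ) (nhds (1/12)) := by
  apply HasDerivAt.lhopital_zero_nhdsNE
    (f' := fun θ => 2 * Real.exp (2*θ) - Real.exp θ * (θ^2 + 2*θ + 2))
    (g' := fun θ : ℝ => (4:ℝ) * θ^3)
  · filter_upwards with θ
    have h := (((hexp2 θ)).sub ((Real.hasDerivAt_exp θ).mul
      ((hasDerivAt_pow 2 θ).add_const 2))).add_const 1
    refine h.congr_deriv ?_ <;> (try simp only [id_eq]) <;> (try push_cast) <;> (try ring)
  · filter_upwards with θ
    have h := hasDerivAt_pow 4 θ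
    refine h.congr_deriv ?_ <;> (try simp only [id_eq]) <;> (try push_cast) <;> (try ring)
  · filter_upwards [ne_ev] with θ hθ
    simpa using pow_ne_zero 3 hθ
  · exact cont_tendsto (by continuity) (by norm_num [Real.exp_zero])
  · exact cont_tendsto (by continuity) (by norm_num)
  · exact step3

/-- (e^θ(θ-1)+1)/θ² → 1/2 -/
private lemma numA : Tendsto (fun θ : ℝ => (Real.exp θ * (θ - 1) + 1) / θ^2)
    (nhdsWithin 0 {(0:ℝ)}ᶜ) (nhds (1/2)) := by
  apply HasDerivAt.lhopital_zero_nhdsNE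
    (f' := fun θ => Real.exp θ * θ) (g' := fun θ : ℝ => (2:ℝ) * θ)
  · filter_upwards with θ
    have h := ((Real.hasDerivAt_exp θ).mul ((hasDerivAt_id θ).sub_const 1)).add_const 1
    refine h.congr_deriv ?_ <;> (try simp only [id_eq]) <;> (try push_cast) <;> (try ring)
  · filter_upwards with θ
    have h := hasDerivAt_pow 2 θ
    refine h.congr_deriv ?_ <;> (try simp only [id_eq]) <;> (try push_cast) <;> (try ring)
  · filter_upwards [ne_ev] with θ hθ
    simpa using hθ
  · exact cont_tendsto (by continuity) (by norm_num [Real.exp_zero])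
  · exact cont_tendsto (by continuity) (by norm_num)
  · have he : Tendsto (fun θ : ℝ => Real.exp θ / 2) (nhdsWithin 0 {(0:ℝ)}ᶜ) (nhds (1/2)) :=
      cont_tendsto (by continuity) (by norm_num [Real.exp_zero])
    apply he.congr'
    filter_upwards [ne_ev] with θ hθ
    field_simp

/-- (e^θ-1)/θ → 1 -/
private lemma numB : Tendsto (fun θ : ℝ => (Real.exp θ - 1) / θ)
    (nhdsWithin 0 {(0:ℝ)}ᶜ) (nhds 1) := by
  have h := hasDerivAt_iff_tendsto_slope.mp (Real.hasDerivAt_exp 0)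
  rw [Real.exp_zero] at h
  apply h.congr
  intro θ
  simp [slope_def_field, Real.exp_zero]

/-- The function
`g(θ) = θ(e^θ-1)(e^θ(θ-1)+1) / (2(p-1)(e^{2θ}-e^θ(θ²+2)+1)) - θ/2`
satisfies `lim_{θ→0} g(θ) = 3/(p-1)`. -/
theorem g_limit_at_zero (p : ℕ) (hp : 2 ≤ p) :
    Tendsto (fun θ : ℝ =>
        θ * (Real.exp θ - 1) * (Real.exp θ * (θ - 1) + 1) /
          (2 * ((p : ℝ) - 1) * (Real.exp (2 * θ) - Real.exp θ * (θ ^ 2 + 2) + 1))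
        - θ / 2)
      (nhdsWithin 0 {(0:ℝ)}ᶜ) (nhds (3 / ((p : ℝ) - 1))) := by
  have hp1 : ((p : ℝ) - 1) ≠ 0 := by
    have : (2:ℝ) ≤ (p:ℝ) := by exact_mod_cast hp
    linarith
  -- numerator / θ^4 → 1/2
  have hN : Tendsto (fun θ : ℝ =>
      (θ * (Real.exp θ - 1) * (Real.exp θ * (θ - 1) + 1)) / θ^4)
      (nhdsWithin 0 {(0:ℝ)}ᶜ) (nhds (1/2)) := by
    have h := numB.mul numA
    rw [show (1:ℝ) * (1/2) = 1/2 by norm_num] at h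
    apply h.congr'
    filter_upwards [ne_ev] with θ hθ
    field_simp
  -- main fraction N/D → 6
  have hF : Tendsto (fun θ : ℝ =>
      θ * (Real.exp θ - 1) * (Real.exp θ * (θ - 1) + 1) /
        (Real.exp (2 * θ) - Real.exp θ * (θ ^ 2 + 2) + 1))
      (nhdsWithin 0 {(0:ℝ)}ᶜ) (nhds 6) := by
    have h := hN.div step4 (by norm_num : (1/12 : ℝ) ≠ 0)
    rw [show (1/2 : ℝ) / (1/12) = 6 by norm_num] at h
    apply h.congr'
    filter_upwards [ne_ev] with θ hθ
    simp only [Pi.div_apply]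
    have ht : (θ:ℝ)^4 ≠ 0 := pow_ne_zero 4 hθ
    rcases eq_or_ne (Real.exp (2 * θ) - Real.exp θ * (θ ^ 2 + 2) + 1) 0 with hD | hD
    · rw [hD]; simp
    · rw [div_div_div_cancel_right₀]
      exact ht
  have hhalf : Tendsto (fun θ : ℝ => θ / 2) (nhdsWithin 0 {(0:ℝ)}ᶜ) (nhds 0) :=
    cont_tendsto (by continuity) (by norm_num)
  have h := (hF.div_const (2 * ((p : ℝ) - 1))).sub hhalf
  rw [show (6:ℝ) / (2 * ((p : ℝ) - 1)) - 0 = 3 / ((p : ℝ) - 1) by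
    field_simp; ring] at h
  apply h.congr
  intro θ
  rw [div_div, mul_comm (Real.exp (2 * θ) - Real.exp θ * (θ ^ 2 + 2) + 1) (2 * ((p : ℝ) - 1))]
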